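/- For every index i with 1 ≤ i ≤ n, the diagonal entry (α_t)_{i,i} tends to +∞ as t → 0+. -/

import Mathlib

open MeasureTheory Filter Topology Matrix

/-- Key inequality: for a real positive definite matrix `A`, `(A i i)⁻¹ ≤ A⁻¹ i i`. -/
lemma inv_diag_ge {k : ℕ} {A : Matrix (Fin k) (Fin k) ℝ} (hA : A.PosDef) (i : Fin k) :
    (A i i)⁻¹ ≤ A⁻¹ i i := by
  classical
  set B := A⁻¹ with hBdef
  have hB : B.PosDef := hA.inv
  have hdet : IsUnit A.det := (Matrix.isUnit_iff_isUnit_det A).1 hA.isUnit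
  have hBsymm : Bᵀ = B := by
    have := hB.isHermitian
    simpa [Matrix.IsHermitian, Matrix.conjTranspose_eq_transpose_of_trivial] using this
  set u : Fin k → ℝ := Pi.single i 1 with hu
  have hu0 : u ≠ 0 := by
    intro h
    have := congrFun h i
    simp [hu] at this
  have hdiag : ∀ (M : Matrix (Fin k) (Fin k) ℝ), u ⬝ᵥ (M *ᵥ u) = M i i := by
    intro M
    simp [hu, single_dotProduct, Matrix.mulVec_single]
  have hBii : 0 < B i i := by
    have := hB.dotProduct_mulVec_pos hu0
    simpa [hdiag B] using this
  have hAii : 0 < A i i := by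
    have := hA.dotProduct_mulVec_pos hu0
    simpa [hdiag A] using this
  set c : ℝ := (B i i)⁻¹ with hc
  set x : Fin k → ℝ := u - c • (B *ᵥ u) with hx
  have hABu : A *ᵥ (B *ᵥ u) = u := by
    rw [Matrix.mulVec_mulVec, hBdef, A.mul_nonsing_inv hdet, Matrix.one_mulVec]
  have hBAu : B *ᵥ (A *ᵥ u) = u := by
    rw [Matrix.mulVec_mulVec, show B * A = 1 from A.nonsing_inv_mul hdet, Matrix.one_mulVec]
  have h4 : (B *ᵥ u) ⬝ᵥ (A *ᵥ u) = 1 := by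
    have h5 : B *ᵥ u = u ᵥ* B := by
      conv_rhs => rw [← hBsymm, Matrix.vecMul_transpose]
    rw [h5, ← Matrix.dotProduct_mulVec, hBAu]
    simp [hu]
  have huu : u ⬝ᵥ u = 1 := by simp [hu]
  have h3 : u ⬝ᵥ (B *ᵥ u) = B i i := hdiag B
  have hkey : 0 ≤ x ⬝ᵥ (A *ᵥ x) := by
    have := hA.posSemidef.dotProduct_mulVec_nonneg x
    simpa using this
  have hexp : x ⬝ᵥ (A *ᵥ x) = A i i - c := by
    rw [hx]
    rw [Matrix.mulVec_sub, Matrix.mulVec_smul, hABu]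
    rw [sub_dotProduct, dotProduct_sub, dotProduct_sub,
      smul_dotProduct, smul_dotProduct, dotProduct_smul,
      dotProduct_smul]
    rw [hdiag A, huu, h4, dotProduct_comm (B *ᵥ u) u, h3]
    simp only [smul_eq_mul, mul_one]
    have hcc : c * (c * B i i) = c := by
      rw [hc, inv_mul_cancel₀ hBii.ne', mul_one]
    rw [hcc]
    ring
  have : c ≤ A i i := by linarith [hexp ▸ hkey]
  have hc' : 0 < c := inv_pos.2 hBii
  calc (A i i)⁻¹ ≤ c⁻¹ := by
        apply inv_anti₀ hc' this
    _ = B i i := by rw [hc, inv_inv]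

/-- The Gram matrix is positive semidefinite. -/
lemma gram_posSemidef {k : ℕ} (f : ℝ → Fin k → ℝ)
    (hf_meas : ∀ i, Measurable fun s => f s i)
    (hf_loc : ∀ i, ∀ t > (0 : ℝ), IntegrableOn (fun s => (f s i) ^ 2) (Set.Ioc 0 t))
    (t : ℝ) (ht : 0 < t) :
    (Matrix.of fun i j => ∫ s in Set.Ioc 0 t, f s i * f s j : Matrix (Fin k) (Fin k) ℝ).PosSemidef := by
  classical
  have hint : ∀ i j : Fin k, IntegrableOn (fun s => f s i * f s j) (Set.Ioc 0 t) := by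
    intro i j
    apply Integrable.mono' (((hf_loc i t ht).add (hf_loc j t ht)))
      (((hf_meas i).mul (hf_meas j)).aestronglyMeasurable)
    filter_upwards with s
    have h1 : |f s i * f s j| = |f s i| * |f s j| := abs_mul _ _
    rw [Real.norm_eq_abs, Pi.mul_apply, h1]
    simp only [Pi.add_apply]
    nlinarith [sq_nonneg (|f s i| - |f s j|), sq_abs (f s i), sq_abs (f s j),
      abs_nonneg (f s i), abs_nonneg (f s j)]
  refine Matrix.PosSemidef.of_dotProduct_mulVec_nonneg ?_ ?_
  · rw [Matrix.IsHermitian]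
    ext i j
    simp only [Matrix.conjTranspose_apply, Matrix.of_apply, star_trivial]
    congr 1
    ext s
    ring
  · intro x
    have hints : ∀ i j : Fin k, IntegrableOn (fun s => x i * f s i * (x j * f s j)) (Set.Ioc 0 t) := by
      intro i j
      have : (fun s => x i * f s i * (x j * f s j)) = fun s => (x i * x j) * (f s i * f s j) := by
        funext s; ring
      rw [this]
      exact (hint i j).const_mul _
    have key : (star x) ⬝ᵥ ((Matrix.of fun i j => ∫ s in Set.Ioc 0 t, f s i * f s j) *ᵥ x)
        = ∫ s in Set.Ioc 0 t, (∑ i, x i * f s i) ^ 2 := by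
      have h2 : ∀ s : ℝ, (∑ i, x i * f s i) ^ 2 = ∑ i, ∑ j, x i * f s i * (x j * f s j) := by
        intro s
        rw [sq, Finset.sum_mul_sum]
      rw [show (fun s => (∑ i, x i * f s i) ^ 2) = fun s => ∑ i, ∑ j, x i * f s i * (x j * f s j)
        from funext h2]
      rw [integral_finset_sum _ (fun i _ => integrable_finset_sum _ (fun j _ => hints i j))]
      simp only [star_trivial, dotProduct, Matrix.mulVec, Matrix.of_apply]
      refine Finset.sum_congr rfl fun i _ => ?_
      rw [integral_finset_sum _ (fun j _ => hints i j)]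
      rw [Finset.mul_sum]
      refine Finset.sum_congr rfl fun j _ => ?_
      have : (fun s => x i * f s i * (x j * f s j)) = fun s => (x i * x j) * (f s i * f s j) := by
        funext s; ring
      rw [this, integral_const_mul]
      ring
    rw [key]
    exact integral_nonneg fun s => sq_nonneg _

lemma posDef_diag_pos {k : ℕ} {A : Matrix (Fin k) (Fin k) ℝ} (hA : A.PosDef) (i : Fin k) :
    0 < A i i := by
  classical
  have hu0 : (Pi.single i 1 : Fin k → ℝ) ≠ 0 := by
    intro h
    have := congrFun h i
    simp at this
  have := hA.dotProduct_mulVec_pos hu0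
  simpa [single_dotProduct, Matrix.mulVec_single] using this

/-- For every index i, the diagonal entry (α_t)_{i,i} tends to +∞ as t → 0+. -/
theorem alpha_diagonal_tendsto_atTop_at_zero
    (n : ℕ) (hn : 1 ≤ n)
    (f : ℝ → Fin n → ℝ)
    (hf_meas : ∀ i, Measurable fun s => f s i)
    (hf_loc : ∀ i, ∀ t > (0 : ℝ), IntegrableOn (fun s => (f s i) ^ 2) (Set.Ioc 0 t))
    (m : ℝ → Matrix (Fin n) (Fin n) ℝ)
    (hm : ∀ t, m t = Matrix.of fun i j => ∫ s in Set.Ioc 0 t, f s i * f s j)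
    (hm_inv : ∀ t > (0 : ℝ), IsUnit (m t))
    (α : ℝ → Matrix (Fin n) (Fin n) ℝ)
    (hα : ∀ t, α t = (m t)⁻¹) :
    ∀ i : Fin n, Tendsto (fun t => α t i i) (𝓝[>] (0 : ℝ)) atTop := by
  classical
  intro i
  have hpsd : ∀ t > (0 : ℝ), (m t).PosSemidef := by
    intro t ht
    rw [hm t]
    exact gram_posSemidef f hf_meas hf_loc t ht
  have hposdef : ∀ t > (0 : ℝ), (m t).PosDef := by
    intro t ht
    refine Matrix.PosDef.of_dotProduct_mulVec_pos (hpsd t ht).1 fun x hx => ?_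
    refine lt_of_le_of_ne ((hpsd t ht).dotProduct_mulVec_nonneg x) ?_
    intro h
    have h0 : m t *ᵥ x = 0 := ((hpsd t ht).dotProduct_mulVec_zero_iff x).1 h.symm
    have hinj := Matrix.mulVec_injective_iff_isUnit.mpr (hm_inv t ht)
    exact hx (hinj (by rw [h0, Matrix.mulVec_zero]))
  have hdiagpos : ∀ t > (0 : ℝ), 0 < m t i i := fun t ht => posDef_diag_pos (hposdef t ht) i
  have hineq : ∀ t > (0 : ℝ), (m t i i)⁻¹ ≤ α t i i := by
    intro t ht
    rw [hα t]
    exact inv_diag_ge (hposdef t ht) i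
  -- m t i i tends to 0 as t → 0+
  have hInt : Integrable (fun s => f s i ^ 2) (volume.restrict (Set.Ioc (0:ℝ) 1)) :=
    hf_loc i 1 one_pos
  have hmeas_tend : Tendsto (fun t => (volume.restrict (Set.Ioc (0:ℝ) 1)) (Set.Ioc (0:ℝ) t))
      (𝓝[>] (0:ℝ)) (𝓝 0) := by
    have hub : ∀ t : ℝ, (volume.restrict (Set.Ioc (0:ℝ) 1)) (Set.Ioc (0:ℝ) t)
        ≤ ENNReal.ofReal t := by
      intro t
      rw [Measure.restrict_apply measurableSet_Ioc]
      calc volume (Set.Ioc (0:ℝ) t ∩ Set.Ioc 0 1) ≤ volume (Set.Ioc (0:ℝ) t) :=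
            measure_mono Set.inter_subset_left
        _ = ENNReal.ofReal t := by rw [Real.volume_Ioc, sub_zero]
    have hof : Tendsto (fun t : ℝ => ENNReal.ofReal t) (𝓝[>] (0:ℝ)) (𝓝 0) := by
      have : Tendsto (fun t : ℝ => ENNReal.ofReal t) (𝓝 (0:ℝ)) (𝓝 (ENNReal.ofReal 0)) :=
        ENNReal.tendsto_ofReal tendsto_id
      simpa using this.mono_left nhdsWithin_le_nhds
    exact tendsto_of_tendsto_of_tendsto_of_le_of_le tendsto_const_nhds hof
      (fun t => zero_le) hub
  have htend0 : Tendsto (fun t => m t i i) (𝓝[>] (0:ℝ)) (𝓝 0) := by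
    have hmain := hInt.tendsto_setIntegral_nhds_zero hmeas_tend
    refine hmain.congr' ?_
    filter_upwards [Ioo_mem_nhdsGT (by norm_num : (0:ℝ) < 1)] with t ht
    rw [Measure.restrict_restrict measurableSet_Ioc]
    have hset : Set.Ioc (0:ℝ) t ∩ Set.Ioc 0 1 = Set.Ioc 0 t := by
      rw [Set.Ioc_inter_Ioc]
      simp [min_eq_left ht.2.le]
    rw [hset, hm t]
    simp only [Matrix.of_apply]
    congr 1
    funext s
    ring
  have htend0' : Tendsto (fun t => m t i i) (𝓝[>] (0:ℝ)) (𝓝[>] (0:ℝ)) := by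
    rw [tendsto_nhdsWithin_iff]
    refine ⟨htend0, ?_⟩
    filter_upwards [self_mem_nhdsWithin] with t ht
    exact hdiagpos t ht
  have hinvtend : Tendsto (fun t => (m t i i)⁻¹) (𝓝[>] (0:ℝ)) atTop :=
    tendsto_inv_nhdsGT_zero.comp htend0'
  refine tendsto_atTop_mono' _ ?_ hinvtend
  filter_upwards [self_mem_nhdsWithin] with t ht
  exact hineq t ht
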